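/- For a graph G of order n and any graph H with at least 2 vertices, the corona product satisfies γ_{R2}(G ∘ H) = 2n. -/

import Mathlib

open Finset Classical in
/-- The Roman `{2}`-domination number of a finite graph: the minimum weight of a
function `f : V → {0,1,2}` such that every vertex `v` with `f v = 0` satisfies
`∑_{u ∈ N(v)} f u ≥ 2`. -/
noncomputable def roman2 {V : Type*} [Fintype V] (G : SimpleGraph V) : ℕ :=
  sInf {w | ∃ f : V → ℕ, (∀ v, f v ≤ 2) ∧
    (∀ v, f v = 0 → 2 ≤ ∑ u ∈ Finset.univ.filter (fun u => G.Adj v u), f u) ∧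
    w = ∑ v, f v}

open Finset Classical in
/-- The domination number. -/
noncomputable def domNum {V : Type*} [Fintype V] (G : SimpleGraph V) : ℕ :=
  sInf {k | ∃ S : Finset V, S.card = k ∧ ∀ v, v ∉ S → ∃ u ∈ S, G.Adj u v}

open Finset Classical in
/-- The 2-domination number. -/
noncomputable def twoDomNum {V : Type*} [Fintype V] (G : SimpleGraph V) : ℕ :=
  sInf {k | ∃ S : Finset V, S.card = k ∧
    ∀ v, v ∉ S → 2 ≤ (S.filter (fun u => G.Adj u v)).card}


/-- The corona `G ∘ H`: one copy of `H` for each vertex of `G`, with vertex `a` of `G`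
joined to every vertex of its copy of `H`. -/
def corona {α β : Type*} (G : SimpleGraph α) (H : SimpleGraph β) :
    SimpleGraph (α ⊕ α × β) where
  Adj x y := match x, y with
    | Sum.inl a, Sum.inl b => G.Adj a b
    | Sum.inl a, Sum.inr (b, _) => a = b
    | Sum.inr (a, _), Sum.inl b => a = b
    | Sum.inr (a, w), Sum.inr (b, w') => a = b ∧ H.Adj w w'
  symm := ⟨by
    rintro (a|⟨a,w⟩) (b|⟨b,w'⟩) h <;> simp_all [SimpleGraph.adj_comm, eq_comm]⟩
  loopless := ⟨by
    rintro (a|⟨a,w⟩) h <;> simp_all⟩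

theorem roman2_corona {V W : Type*} [Fintype V] [Fintype W]
    (G : SimpleGraph V) (H : SimpleGraph W) (hW : 2 ≤ Fintype.card W) :
    roman2 (corona G H) = 2 * Fintype.card V := by
  classical
  have hmem : 2 * Fintype.card V ∈ {w | ∃ f : (V ⊕ V × W) → ℕ, (∀ v, f v ≤ 2) ∧
      (∀ v, f v = 0 → 2 ≤ ∑ u ∈ Finset.univ.filter (fun u => (corona G H).Adj v u), f u) ∧
      w = ∑ v, f v} := by
    refine ⟨fun x => match x with | Sum.inl _ => 2 | Sum.inr _ => 0, ?_, ?_, ?_⟩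
    · rintro (a|p) <;> simp
    · rintro (a|⟨a,w⟩) h
      · simp at h
      · have hadj : (corona G H).Adj (Sum.inr (a,w)) (Sum.inl a) := by
          show a = a; rfl
        have hmem2 : (Sum.inl a : V ⊕ V × W) ∈ Finset.univ.filter
            (fun u => (corona G H).Adj (Sum.inr (a,w)) u) := by
          simp [hadj]
        have := Finset.single_le_sum (f := fun x => (match x with
            | Sum.inl _ => 2 | Sum.inr _ => 0 : ℕ)) (fun i _ => Nat.zero_le _) hmem2
        simp at this
        exact this
    · rw [Fintype.sum_sum_type]
      simp [mul_comm]
  unfold roman2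
  refine le_antisymm (Nat.sInf_le hmem) (le_csInf ⟨_, hmem⟩ ?_)
  rintro w ⟨f, hle, hdom, rfl⟩
  have key : ∀ a : V, 2 ≤ f (Sum.inl a) + ∑ w, f (Sum.inr (a, w)) := by
    intro a
    by_contra hlt
    push_neg at hlt
    have hS : ∑ w, f (Sum.inr (a,w)) ≤ 1 := by omega
    have hex : ∃ w0, f (Sum.inr (a, w0)) = 0 := by
      by_contra hno
      push_neg at hno
      have h1 : Fintype.card W ≤ ∑ w, f (Sum.inr (a,w)) := by
        rw [← Finset.card_univ, Finset.card_eq_sum_ones]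
        exact Finset.sum_le_sum (fun w _ => Nat.one_le_iff_ne_zero.mpr (hno w))
      omega
    obtain ⟨w0, hw0⟩ := hex
    have h2 := hdom _ hw0
    have hsub : Finset.univ.filter (fun u => (corona G H).Adj (Sum.inr (a,w0)) u) ⊆
        insert (Sum.inl a)
          ((Finset.univ : Finset W).image (fun w => (Sum.inr (a, w) : V ⊕ V × W))) := by
      intro u hu
      simp only [Finset.mem_filter] at hu
      rcases u with b | ⟨b, w'⟩
      · have hb : a = b := hu.2
        simp [hb]
      · obtain ⟨hb, -⟩ := hu.2
        simp only [Finset.mem_insert, Finset.mem_image]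
        exact Or.inr ⟨w', Finset.mem_univ _, by rw [hb]⟩
    have h3 := Finset.sum_le_sum_of_subset (f := f) hsub
    rw [Finset.sum_insert (by simp), Finset.sum_image (by intro x _ y _ h; simpa using h)] at h3
    omega
  rw [Fintype.sum_sum_type, Fintype.sum_prod_type, ← Finset.sum_add_distrib]
  calc 2 * Fintype.card V = ∑ _a : V, 2 := by simp [mul_comm]
    _ ≤ _ := Finset.sum_le_sum (fun a _ => key a)
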